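/- Let 𝕂 be a field of characteristic 0 and let W^− = 𝕂⟦u⟧, W^∞ = 𝕂((u)). Let E be a 𝕂⟦u⟧-module. Then there is a natural isomorphism Hom_{𝕂⟦u⟧}(E, 𝕂⟦u⟧) ≅ Hom_{𝕂}(E ⊗_{𝕂⟦u⟧} (𝕂((u))/u𝕂⟦u⟧), 𝕂). -/

import Mathlib

open scoped TensorProduct

/-- The `𝕂⟦u⟧`-submodule `u·𝕂⟦u⟧` of `𝕂((u))`. -/
noncomputable def uLattice (𝕂 : Type) [Field 𝕂] :
    Submodule (PowerSeries 𝕂) (LaurentSeries 𝕂) :=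
  Submodule.map (Algebra.linearMap (PowerSeries 𝕂) (LaurentSeries 𝕂))
    (Ideal.span {PowerSeries.X})

namespace HJ

open HahnSeries

variable {𝕂 : Type} [Field 𝕂]

lemma ofPS_smul (f : PowerSeries 𝕂) (x : LaurentSeries 𝕂) :
    f • x = (ofPowerSeries ℤ 𝕂) f * x := by
  rw [Algebra.smul_def, LaurentSeries.coe_algebraMap]

instance : IsScalarTower 𝕂 (PowerSeries 𝕂) (LaurentSeries 𝕂) := by
  constructor
  intro k f x
  rw [PowerSeries.smul_eq_C_mul, ofPS_smul, ofPS_smul, map_mul,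
    HahnSeries.ofPowerSeries_C, mul_assoc, HahnSeries.C_mul_eq_smul,
    ← HahnSeries.C_mul_eq_smul, HahnSeries.C_mul_eq_smul]

lemma coeff_ofPS_neg (x : PowerSeries 𝕂) {n : ℤ} (hn : n < 0) :
    ((ofPowerSeries ℤ 𝕂) x).coeff n = 0 := by
  rw [HahnSeries.ofPowerSeries_apply]
  apply HahnSeries.embDomain_notin_range
  rintro ⟨m, hm⟩
  have : ((m : ℕ) : ℤ) = n := hm
  omega

/-- The residue pairing on Laurent series. -/
noncomputable def pairL (f : PowerSeries 𝕂) : LaurentSeries 𝕂 →ₗ[𝕂] 𝕂 where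
  toFun x := (f • x).coeff 0
  map_add' x y := by
    show (f • (x + y)).coeff 0 = (f • x).coeff 0 + (f • y).coeff 0
    rw [ofPS_smul, mul_add, HahnSeries.coeff_add, ← ofPS_smul, ← ofPS_smul]
  map_smul' k x := by
    show (f • k • x).coeff 0 = k * (f • x).coeff 0
    rw [ofPS_smul, ← HahnSeries.C_mul_eq_smul, mul_left_comm, HahnSeries.C_mul_eq_smul,
      HahnSeries.coeff_smul, smul_eq_mul, ofPS_smul]

lemma pairL_apply (f : PowerSeries 𝕂) (x : LaurentSeries 𝕂) :
    pairL f x = (f • x).coeff 0 := rfl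

lemma mem_uLattice {x : LaurentSeries 𝕂} :
    x ∈ uLattice 𝕂 ↔ ∃ q : PowerSeries 𝕂, x = (ofPowerSeries ℤ 𝕂) (PowerSeries.X * q) := by
  constructor
  · rintro ⟨p, hp, rfl⟩
    obtain ⟨q, rfl⟩ := Ideal.mem_span_singleton.1 hp
    exact ⟨q, by rw [Algebra.linearMap_apply, LaurentSeries.coe_algebraMap]⟩
  · rintro ⟨q, rfl⟩
    exact ⟨PowerSeries.X * q, Ideal.mem_span_singleton.2 ⟨q, rfl⟩,
      by rw [Algebra.linearMap_apply, LaurentSeries.coe_algebraMap]⟩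

lemma pairL_uLattice (f : PowerSeries 𝕂) {x : LaurentSeries 𝕂} (hx : x ∈ uLattice 𝕂) :
    pairL f x = 0 := by
  obtain ⟨q, rfl⟩ := mem_uLattice.1 hx
  rw [pairL_apply, ofPS_smul, ← map_mul]
  have : ((0 : ℕ) : ℤ) = (0 : ℤ) := rfl
  rw [← this, HahnSeries.ofPowerSeries_apply_coeff]
  simp [PowerSeries.coeff_zero_eq_constantCoeff, mul_comm]

noncomputable def pairM (f : PowerSeries 𝕂) :
    (LaurentSeries 𝕂 ⧸ uLattice 𝕂) →ₗ[𝕂] 𝕂 :=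
  Submodule.liftQ ((uLattice 𝕂).restrictScalars 𝕂) (pairL f)
    (fun x hx => pairL_uLattice f hx)

lemma pairM_mk (f : PowerSeries 𝕂) (x : LaurentSeries 𝕂) :
    pairM f (Submodule.Quotient.mk x) = (f • x).coeff 0 := rfl

section

variable (f f' r : PowerSeries 𝕂) (k : 𝕂) (m : LaurentSeries 𝕂 ⧸ uLattice 𝕂)

lemma pairM_zero : pairM (0 : PowerSeries 𝕂) m = 0 := by
  obtain ⟨x, rfl⟩ := Submodule.Quotient.mk_surjective _ m
  rw [pairM_mk, ofPS_smul, map_zero, zero_mul, HahnSeries.coeff_zero]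

lemma pairM_addf : pairM (f + f') m = pairM f m + pairM f' m := by
  obtain ⟨x, rfl⟩ := Submodule.Quotient.mk_surjective _ m
  rw [pairM_mk, pairM_mk, pairM_mk, ofPS_smul, ofPS_smul, ofPS_smul, map_add,
    add_mul, HahnSeries.coeff_add]

lemma pairM_mulf : pairM (r * f) m = pairM f (r • m) := by
  obtain ⟨x, rfl⟩ := Submodule.Quotient.mk_surjective _ m
  rw [← Submodule.Quotient.mk_smul, pairM_mk, pairM_mk, ofPS_smul, ofPS_smul,
    ofPS_smul, map_mul, mul_assoc, mul_left_comm]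

lemma pairM_ksmul : pairM (k • f) m = k * pairM f m := by
  obtain ⟨x, rfl⟩ := Submodule.Quotient.mk_surjective _ m
  rw [pairM_mk, pairM_mk, smul_assoc, HahnSeries.coeff_smul, smul_eq_mul]

end

variable {E : Type} [AddCommGroup E] [Module (PowerSeries 𝕂) E] [Module 𝕂 E]
  [IsScalarTower 𝕂 (PowerSeries 𝕂) E]

/-- The forward map, as an additive map. -/
noncomputable def toDualAdd (g : E →ₗ[PowerSeries 𝕂] PowerSeries 𝕂) :
    E ⊗[PowerSeries 𝕂] (LaurentSeries 𝕂 ⧸ uLattice 𝕂) →+ 𝕂 :=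
  TensorProduct.liftAddHom
    { toFun := fun e => (pairM (g e)).toAddMonoidHom
      map_zero' := by
        ext m
        show pairM (g 0) m = 0
        rw [map_zero g]
        exact pairM_zero m
      map_add' := fun e e' => by
        ext m
        show pairM (g (e + e')) m = pairM (g e) m + pairM (g e') m
        rw [map_add g]
        exact pairM_addf _ _ m }
    (fun r e m => by
      show pairM (g (r • e)) m = pairM (g e) (r • m)
      rw [map_smul g, smul_eq_mul]
      exact pairM_mulf _ _ m)

lemma toDualAdd_tmul (g : E →ₗ[PowerSeries 𝕂] PowerSeries 𝕂) (e : E)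
    (m : LaurentSeries 𝕂 ⧸ uLattice 𝕂) :
    toDualAdd g (e ⊗ₜ m) = pairM (g e) m :=
  TensorProduct.liftAddHom_tmul _ _ e m

lemma g_ksmul (g : E →ₗ[PowerSeries 𝕂] PowerSeries 𝕂) (k : 𝕂) (e : E) :
    g (k • e) = k • g e := by
  rw [← algebraMap_smul (PowerSeries 𝕂) k e, map_smul, algebraMap_smul]

/-- The forward map. -/
noncomputable def toDual (g : E →ₗ[PowerSeries 𝕂] PowerSeries 𝕂) :
    (E ⊗[PowerSeries 𝕂] (LaurentSeries 𝕂 ⧸ uLattice 𝕂)) →ₗ[𝕂] 𝕂 where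
  toFun := toDualAdd g
  map_add' := map_add _
  map_smul' k t := by
    show toDualAdd g (k • t) = (RingHom.id 𝕂 k) • toDualAdd g t
    rw [RingHom.id_apply]
    induction t with
    | zero => rw [smul_zero, map_zero, smul_zero]
    | tmul e m =>
      rw [TensorProduct.smul_tmul', toDualAdd_tmul, toDualAdd_tmul, g_ksmul,
        pairM_ksmul, smul_eq_mul]
    | add x y hx hy => rw [smul_add, map_add, hx, hy, map_add, smul_add]

lemma toDual_tmul (g : E →ₗ[PowerSeries 𝕂] PowerSeries 𝕂) (e : E)
    (m : LaurentSeries 𝕂 ⧸ uLattice 𝕂) :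
    toDual g (e ⊗ₜ m) = pairM (g e) m :=
  toDualAdd_tmul g e m

/-- Class of `u^{-n}` in the quotient. -/
noncomputable def usingle (n : ℕ) : LaurentSeries 𝕂 ⧸ uLattice 𝕂 :=
  Submodule.Quotient.mk (single (-(n : ℤ)) 1)

noncomputable def fromDualFun
    (φ : (E ⊗[PowerSeries 𝕂] (LaurentSeries 𝕂 ⧸ uLattice 𝕂)) →ₗ[𝕂] 𝕂) (e : E) :
    PowerSeries 𝕂 :=
  PowerSeries.mk fun n => φ (e ⊗ₜ usingle n)

lemma coeff_fromDualFun (φ : (E ⊗[PowerSeries 𝕂] (LaurentSeries 𝕂 ⧸ uLattice 𝕂)) →ₗ[𝕂] 𝕂)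
    (e : E) (n : ℕ) :
    PowerSeries.coeff n (fromDualFun φ e) = φ (e ⊗ₜ usingle n) :=
  PowerSeries.coeff_mk _ _

omit [Module 𝕂 E] [IsScalarTower 𝕂 (PowerSeries 𝕂) E] in
lemma mk_single (c : 𝕂) (a : ℤ) :
    (Submodule.Quotient.mk (single a c) : LaurentSeries 𝕂 ⧸ uLattice 𝕂)
      = PowerSeries.C c • Submodule.Quotient.mk (single a 1) := by
  rw [← Submodule.Quotient.mk_smul]
  congr 1
  rw [ofPS_smul, HahnSeries.ofPowerSeries_C, HahnSeries.C_apply,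
    HahnSeries.single_mul_single, zero_add, mul_one]

lemma phi_Csmul (φ : (E ⊗[PowerSeries 𝕂] (LaurentSeries 𝕂 ⧸ uLattice 𝕂)) →ₗ[𝕂] 𝕂)
    (e : E) (c : 𝕂) (m : LaurentSeries 𝕂 ⧸ uLattice 𝕂) :
    φ (e ⊗ₜ (PowerSeries.C c • m)) = c * φ (e ⊗ₜ m) := by
  rw [← TensorProduct.smul_tmul, PowerSeries.C_eq_algebraMap, algebraMap_smul,
    ← TensorProduct.smul_tmul', map_smul, smul_eq_mul]

omit [Module 𝕂 E] [IsScalarTower 𝕂 (PowerSeries 𝕂) E] in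
/-- Truncation: modulo `u𝕂⟦u⟧`, `r • u^{-n}` only sees the first `n+1` coefficients of `r`. -/
lemma truncation (r : PowerSeries 𝕂) (n : ℕ) :
    (Submodule.Quotient.mk (r • single (-(n : ℤ)) (1 : 𝕂))
        : LaurentSeries 𝕂 ⧸ uLattice 𝕂)
      = Submodule.Quotient.mk (∑ i ∈ Finset.range (n + 1),
          single ((i : ℤ) - n) (PowerSeries.coeff i r)) := by
  classical
  rw [Submodule.Quotient.eq]
  set T : PowerSeries 𝕂 := ∑ i ∈ Finset.range (n + 1),
    PowerSeries.C (PowerSeries.coeff i r) * PowerSeries.X ^ i with hT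
  have hdvd : PowerSeries.X ^ (n + 1) ∣ (r - T) := by
    rw [PowerSeries.X_pow_dvd_iff]
    intro m hm
    have hTm : PowerSeries.coeff m T = PowerSeries.coeff m r := by
      rw [hT, map_sum]
      rw [Finset.sum_congr rfl (fun i _ => by
        rw [PowerSeries.coeff_C_mul, PowerSeries.coeff_X_pow, mul_ite, mul_one, mul_zero])]
      rw [Finset.sum_ite_eq (Finset.range (n + 1)) m
        (fun i => PowerSeries.coeff i r), if_pos (Finset.mem_range.2 hm)]
    rw [map_sub, hTm, sub_self]
  obtain ⟨q, hq⟩ := hdvd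
  have hsplit : r = T + PowerSeries.X ^ (n + 1) * q := by
    rw [← hq]; ring
  have hTmul : (ofPowerSeries ℤ 𝕂) T * single (-(n : ℤ)) (1 : 𝕂)
      = ∑ i ∈ Finset.range (n + 1), single ((i : ℤ) - n) (PowerSeries.coeff i r) := by
    rw [hT, map_sum, Finset.sum_mul]
    refine Finset.sum_congr rfl fun i _ => ?_
    rw [map_mul, HahnSeries.ofPowerSeries_C, HahnSeries.C_apply,
      HahnSeries.ofPowerSeries_X_pow, HahnSeries.single_mul_single,
      HahnSeries.single_mul_single, zero_add, mul_one, mul_one]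
    congr 1
  have hXmul : (ofPowerSeries ℤ 𝕂) (PowerSeries.X ^ (n + 1) * q) * single (-(n : ℤ)) (1 : 𝕂)
      = (ofPowerSeries ℤ 𝕂) (PowerSeries.X * q) := by
    have : PowerSeries.X ^ (n + 1) * q = (PowerSeries.X * q) * PowerSeries.X ^ n := by ring
    rw [this, map_mul, HahnSeries.ofPowerSeries_X_pow, mul_assoc,
      HahnSeries.single_mul_single, mul_one]
    rw [show (n : ℤ) + -(n : ℤ) = 0 by ring, HahnSeries.single_zero_one, mul_one]
  rw [ofPS_smul, show (ofPowerSeries ℤ 𝕂) r = (ofPowerSeries ℤ 𝕂) T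
      + (ofPowerSeries ℤ 𝕂) (PowerSeries.X ^ (n + 1) * q) from by rw [← map_add, ← hsplit],
    add_mul, hTmul, hXmul, add_sub_cancel_left]
  exact mem_uLattice.2 ⟨q, rfl⟩

lemma phi_rsmul (φ : (E ⊗[PowerSeries 𝕂] (LaurentSeries 𝕂 ⧸ uLattice 𝕂)) →ₗ[𝕂] 𝕂)
    (e : E) (r : PowerSeries 𝕂) (n : ℕ) :
    φ ((r • e) ⊗ₜ usingle n)
      = ∑ i ∈ Finset.range (n + 1),
          PowerSeries.coeff i r * φ (e ⊗ₜ usingle (n - i)) := by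
  rw [TensorProduct.smul_tmul]
  have h1 : r • (usingle n : LaurentSeries 𝕂 ⧸ uLattice 𝕂)
      = ∑ i ∈ Finset.range (n + 1),
          Submodule.Quotient.mk (single ((i : ℤ) - n) (PowerSeries.coeff i r)) := by
    rw [usingle, ← Submodule.Quotient.mk_smul, truncation]
    exact map_sum ((uLattice 𝕂).mkQ) _ _
  rw [h1, TensorProduct.tmul_sum, map_sum]
  refine Finset.sum_congr rfl fun i hi => ?_
  rw [mk_single, phi_Csmul]
  have h2 : ((i : ℤ) - n) = -((n - i : ℕ) : ℤ) := by
    have := Finset.mem_range.1 hi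
    omega
  rw [usingle, h2]

/-- The backward map. -/
noncomputable def fromDual (φ : (E ⊗[PowerSeries 𝕂] (LaurentSeries 𝕂 ⧸ uLattice 𝕂)) →ₗ[𝕂] 𝕂) :
    E →ₗ[PowerSeries 𝕂] PowerSeries 𝕂 where
  toFun := fromDualFun φ
  map_add' e e' := by
    ext n
    show PowerSeries.coeff n (fromDualFun φ (e + e'))
      = PowerSeries.coeff n (fromDualFun φ e + fromDualFun φ e')
    rw [map_add, coeff_fromDualFun, coeff_fromDualFun, coeff_fromDualFun,
      TensorProduct.add_tmul, map_add]
  map_smul' r e := by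
    ext n
    show PowerSeries.coeff n (fromDualFun φ (r • e))
      = PowerSeries.coeff n (r • fromDualFun φ e)
    rw [smul_eq_mul, PowerSeries.coeff_mul, coeff_fromDualFun, phi_rsmul,
      Finset.Nat.sum_antidiagonal_eq_sum_range_succ_mk]
    exact Finset.sum_congr rfl fun i hi => by rw [coeff_fromDualFun]

lemma pairM_usingle (f : PowerSeries 𝕂) (n : ℕ) :
    pairM f (usingle n : LaurentSeries 𝕂 ⧸ uLattice 𝕂) = PowerSeries.coeff n f := by
  rw [usingle, pairM_mk, ofPS_smul]
  have h := HahnSeries.coeff_mul_single_add (r := (1 : 𝕂))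
    (x := (ofPowerSeries ℤ 𝕂) f) (a := (n : ℤ)) (b := -(n : ℤ))
  rw [show (n : ℤ) + -(n : ℤ) = 0 by ring] at h
  rw [h, mul_one, HahnSeries.ofPowerSeries_apply_coeff]

lemma key (φ : (E ⊗[PowerSeries 𝕂] (LaurentSeries 𝕂 ⧸ uLattice 𝕂)) →ₗ[𝕂] 𝕂)
    (e : E) (N : ℕ) :
    ∀ x : LaurentSeries 𝕂, (∀ n : ℤ, n < -(N : ℤ) → x.coeff n = 0) →
      ((fromDualFun φ e) • x).coeff 0 = φ (e ⊗ₜ Submodule.Quotient.mk x) := by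
  induction N with
  | zero =>
    intro x hx
    set p : PowerSeries 𝕂 := PowerSeries.mk fun k => x.coeff k with hp
    have hxp : (ofPowerSeries ℤ 𝕂) p = x := by
      ext m
      rcases lt_or_ge m 0 with hm | hm
      · rw [coeff_ofPS_neg _ hm, hx m (by exact_mod_cast hm)]
      · lift m to ℕ using hm
        rw [HahnSeries.ofPowerSeries_apply_coeff, hp, PowerSeries.coeff_mk]
    have hdvd : PowerSeries.X ∣ (p - PowerSeries.C (PowerSeries.coeff 0 p)) := by
      rw [PowerSeries.X_dvd_iff]
      rw [map_sub, ← PowerSeries.coeff_zero_eq_constantCoeff_apply,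
        ← PowerSeries.coeff_zero_eq_constantCoeff_apply, PowerSeries.coeff_zero_C, sub_self]
    obtain ⟨q, hq⟩ := hdvd
    have hsplit : p = PowerSeries.C (PowerSeries.coeff 0 p) + PowerSeries.X * q := by
      rw [← hq]; ring
    have hmk : (Submodule.Quotient.mk x : LaurentSeries 𝕂 ⧸ uLattice 𝕂)
        = PowerSeries.C (PowerSeries.coeff 0 p) • usingle 0 := by
      rw [← hxp]
      rw [show (ofPowerSeries ℤ 𝕂) p
          = (ofPowerSeries ℤ 𝕂) (PowerSeries.C (PowerSeries.coeff 0 p))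
            + (ofPowerSeries ℤ 𝕂) (PowerSeries.X * q) from by rw [← map_add, ← hsplit]]
      rw [Submodule.Quotient.mk_add,
        (Submodule.Quotient.mk_eq_zero _).2 (mem_uLattice.2 ⟨q, rfl⟩), add_zero,
        HahnSeries.ofPowerSeries_C, HahnSeries.C_apply, mk_single, usingle]
      norm_num
    rw [hmk, phi_Csmul, ← hxp, ofPS_smul, ← map_mul,
      show (0 : ℤ) = ((0 : ℕ) : ℤ) from rfl, HahnSeries.ofPowerSeries_apply_coeff,
      PowerSeries.coeff_zero_eq_constantCoeff_apply, map_mul,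
      ← PowerSeries.coeff_zero_eq_constantCoeff_apply,
      ← PowerSeries.coeff_zero_eq_constantCoeff_apply, coeff_fromDualFun, mul_comm]
  | succ N ih =>
    intro x hx
    set a : ℤ := -((N : ℤ) + 1) with ha
    set c : 𝕂 := x.coeff a with hc
    set x' : LaurentSeries 𝕂 := x - single a c with hx'def
    have hx' : ∀ n : ℤ, n < -(N : ℤ) → x'.coeff n = 0 := by
      intro n hn
      rw [hx'def, HahnSeries.coeff_sub]
      rcases eq_or_lt_of_le (show n ≤ a by omega) with h | h
      · rw [← h, HahnSeries.coeff_single_same, hc, h, sub_self]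
      · rw [HahnSeries.coeff_single_of_ne (by omega), hx n (by push_cast; omega), sub_zero]
    have hdec : x = single a c + x' := by rw [hx'def]; ring
    have hsingle : ((fromDualFun φ e) • (single a c : LaurentSeries 𝕂)).coeff 0
        = φ (e ⊗ₜ Submodule.Quotient.mk (single a c)) := by
      rw [ofPS_smul]
      have h := HahnSeries.coeff_mul_single_add (r := c)
        (x := (ofPowerSeries ℤ 𝕂) (fromDualFun φ e)) (a := ((N + 1 : ℕ) : ℤ)) (b := a)
      rw [show ((N + 1 : ℕ) : ℤ) + a = 0 by push_cast; omega] at h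
      rw [h, HahnSeries.ofPowerSeries_apply_coeff, coeff_fromDualFun, mk_single, phi_Csmul]
      rw [show a = -((N + 1 : ℕ) : ℤ) by push_cast; omega]
      rw [← usingle, mul_comm]
    rw [hdec, ofPS_smul, mul_add, HahnSeries.coeff_add, ← ofPS_smul, ← ofPS_smul,
      Submodule.Quotient.mk_add, TensorProduct.tmul_add, map_add, hsingle,
      ih x' hx']

lemma toDual_fromDual (φ : (E ⊗[PowerSeries 𝕂] (LaurentSeries 𝕂 ⧸ uLattice 𝕂)) →ₗ[𝕂] 𝕂) :
    toDual (fromDual φ) = φ := by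
  apply LinearMap.ext
  intro t
  induction t with
  | zero => rw [map_zero, map_zero]
  | tmul e m =>
    obtain ⟨x, rfl⟩ := Submodule.Quotient.mk_surjective _ m
    rw [toDual_tmul, pairM_mk]
    exact key φ e x.order.natAbs x
      (fun n hn => HahnSeries.coeff_eq_zero_of_lt_order (by omega))
  | add y z hy hz => rw [map_add, map_add, hy, hz]

lemma fromDual_toDual (g : E →ₗ[PowerSeries 𝕂] PowerSeries 𝕂) :
    fromDual (toDual g) = g := by
  apply LinearMap.ext
  intro e
  apply PowerSeries.ext
  intro n
  rw [show fromDual (toDual g) e = fromDualFun (toDual g) e from rfl,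
    coeff_fromDualFun, toDual_tmul, pairM_usingle]

set_option maxHeartbeats 1000000 in
/-- The Hood–Jones duality isomorphism. -/
noncomputable def hj :
    (E →ₗ[PowerSeries 𝕂] PowerSeries 𝕂) ≃ₗ[𝕂]
      ((E ⊗[PowerSeries 𝕂] (LaurentSeries 𝕂 ⧸ uLattice 𝕂)) →ₗ[𝕂] 𝕂) where
  toFun := toDual
  invFun := fromDual
  left_inv := fromDual_toDual
  right_inv := toDual_fromDual
  map_add' g g' := by
    apply LinearMap.ext
    intro t
    induction t with
    | zero => rw [map_zero, LinearMap.add_apply, map_zero, map_zero, add_zero]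
    | tmul e m =>
      rw [LinearMap.add_apply, toDual_tmul, toDual_tmul, toDual_tmul, LinearMap.add_apply]
      exact pairM_addf _ _ m
    | add y z hy hz =>
      rw [map_add, hy, hz, LinearMap.add_apply, LinearMap.add_apply, LinearMap.add_apply,
        map_add, map_add]
      ring
  map_smul' k g := by
    apply LinearMap.ext
    intro t
    induction t with
    | zero => rw [map_zero, RingHom.id_apply, LinearMap.smul_apply, map_zero, smul_zero]
    | tmul e m =>
      rw [RingHom.id_apply, LinearMap.smul_apply, toDual_tmul, toDual_tmul,
        LinearMap.smul_apply, pairM_ksmul, smul_eq_mul]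
    | add y z hy hz =>
      rw [map_add, hy, hz]
      exact (map_add _ y z).symm

end HJ

/-- Hood–Jones duality (module-theoretic form): for a `𝕂⟦u⟧`-module `E`, there is a natural
isomorphism `Hom_{𝕂⟦u⟧}(E, 𝕂⟦u⟧) ≅ Hom_𝕂(E ⊗_{𝕂⟦u⟧} (𝕂((u))/u𝕂⟦u⟧), 𝕂)`. -/
theorem stmt9 (𝕂 : Type) [Field 𝕂] [CharZero 𝕂]
    (E : Type) [AddCommGroup E] [Module (PowerSeries 𝕂) E]
    [Module 𝕂 E] [IsScalarTower 𝕂 (PowerSeries 𝕂) E] :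
    Nonempty ((E →ₗ[PowerSeries 𝕂] PowerSeries 𝕂) ≃ₗ[𝕂]
      ((E ⊗[PowerSeries 𝕂] (LaurentSeries 𝕂 ⧸ uLattice 𝕂)) →ₗ[𝕂] 𝕂)) :=
  ⟨HJ.hj⟩
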